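/- Let a ≤ b be positive coprime integers and H = {(s+1)/a + (t+1)/b : s,t ∈ ℕ}. Then {c ∈ H : c > 1} = {1 + (k+1)/(ab) : k ∈ ℕ}. In particular every integer greater than 1 lies in H, and min{c ∈ H : c > 1} = 1 + 1/(ab). -/

import Mathlib

lemma key_rep (a b n : ℕ) (ha : 0 < a) (hb : 0 < b) (hcop : Nat.Coprime a b)
    (hn : a * b < n) : ∃ s t : ℕ, n = b * (s + 1) + a * (t + 1) := by
  haveI : NeZero a := ⟨ha.ne'⟩
  have hu : IsUnit (b : ZMod a) := (ZMod.isUnit_iff_coprime b a).mpr hcop.symm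
  set x' : ZMod a := (n : ZMod a) * (b : ZMod a)⁻¹ with hx'
  have hbx' : (b : ZMod a) * x' = (n : ZMod a) := by
    rw [hx', mul_comm (n : ZMod a), ← mul_assoc, ZMod.mul_inv_of_unit _ hu, one_mul]
  set x : ℕ := if x'.val = 0 then a else x'.val with hx
  have hx1 : 1 ≤ x := by
    rw [hx]; split_ifs with h
    · exact ha
    · omega
  have hxa : x ≤ a := by
    rw [hx]; split_ifs with h
    · exact le_refl a
    · exact le_of_lt (ZMod.val_lt x')
  have hmod : ((b * x : ℕ) : ZMod a) = (n : ZMod a) := by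
    push_cast
    rw [hx]; split_ifs with h
    · have h0 : x' = 0 := by rwa [← ZMod.val_eq_zero]
      rw [h0, mul_zero] at hbx'
      rw [← hbx', ZMod.natCast_self, mul_zero]
    · rw [ZMod.natCast_val, ZMod.cast_id, hbx']
  have hle : b * x ≤ a * b := by
    calc b * x ≤ b * a := Nat.mul_le_mul_left b hxa
    _ = a * b := Nat.mul_comm b a
  have hlt : b * x < n := lt_of_le_of_lt hle hn
  clear_value x'
  have hdvd : a ∣ n - b * x := by
    have : ((n - b * x : ℕ) : ZMod a) = 0 := by
      rw [Nat.cast_sub (le_of_lt hlt), hmod, sub_self]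
    exact (ZMod.natCast_eq_zero_iff _ _).mp this
  clear_value x
  obtain ⟨y, hy⟩ := hdvd
  have hy1 : 1 ≤ y := by
    rcases Nat.eq_zero_or_pos y with h | h
    · subst h; simp at hy; omega
    · exact h
  refine ⟨x - 1, y - 1, ?_⟩
  rw [Nat.sub_add_cancel hx1, Nat.sub_add_cancel hy1]
  omega

theorem stmt_15 (a b : ℕ) (ha : 0 < a) (hab : a ≤ b) (hcop : Nat.Coprime a b) :
    ({c ∈ {x : ℚ | ∃ s t : ℕ, x = ((s : ℚ) + 1) / a + ((t : ℚ) + 1) / b} | 1 < c} =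
      {x : ℚ | ∃ k : ℕ, x = 1 + ((k : ℚ) + 1) / ((a : ℚ) * b)}) ∧
    (∀ m : ℕ, 1 < m →
      (m : ℚ) ∈ {x : ℚ | ∃ s t : ℕ, x = ((s : ℚ) + 1) / a + ((t : ℚ) + 1) / b}) ∧
    IsLeast {c ∈ {x : ℚ | ∃ s t : ℕ, x = ((s : ℚ) + 1) / a + ((t : ℚ) + 1) / b} | 1 < c}
      (1 + 1 / ((a : ℚ) * b)) := by
  have hb : 0 < b := lt_of_lt_of_le ha hab
  have ha' : (a : ℚ) ≠ 0 := Nat.cast_ne_zero.mpr ha.ne'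
  have hb' : (b : ℚ) ≠ 0 := Nat.cast_ne_zero.mpr hb.ne'
  have hab0 : (0 : ℚ) < (a : ℚ) * b := by positivity
  have hform : ∀ s t : ℕ, ((s : ℚ) + 1) / a + ((t : ℚ) + 1) / b
      = ((b * (s + 1) + a * (t + 1) : ℕ) : ℚ) / ((a : ℚ) * b) := by
    intro s t
    push_cast
    field_simp
  have hset : {c ∈ {x : ℚ | ∃ s t : ℕ, x = ((s : ℚ) + 1) / a + ((t : ℚ) + 1) / b} | 1 < c} =
      {x : ℚ | ∃ k : ℕ, x = 1 + ((k : ℚ) + 1) / ((a : ℚ) * b)} := by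
    ext c
    simp only [Set.mem_setOf_eq, Set.mem_sep_iff]
    constructor
    · rintro ⟨⟨s, t, rfl⟩, hc⟩
      rw [hform s t] at hc ⊢
      generalize hNd : b * (s + 1) + a * (t + 1) = N at hc ⊢
      have hNlt : a * b < N := by
        rw [lt_div_iff₀ hab0, one_mul] at hc
        exact_mod_cast hc
      refine ⟨N - a * b - 1, ?_⟩
      have hNe : (N : ℚ) = (a : ℚ) * b + ((N - a * b - 1 : ℕ) : ℚ) + 1 := by
        have h2 : ((a * b + (N - a * b - 1) + 1 : ℕ) : ℚ) = (N : ℚ) := by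
          congr 1; omega
        push_cast at h2
        linarith
      rw [hNe]
      field_simp
      ring
    · rintro ⟨k, rfl⟩
      obtain ⟨s, t, hst⟩ := key_rep a b (a * b + k + 1) ha hb hcop (by omega)
      refine ⟨⟨s, t, ?_⟩, ?_⟩
      · rw [hform s t, ← hst]
        push_cast
        field_simp
        ring
      · have : 0 < ((k : ℚ) + 1) / ((a : ℚ) * b) := by positivity
        linarith
  refine ⟨hset, ?_, ?_⟩
  · intro m hm
    obtain ⟨s, t, hst⟩ := key_rep a b (m * (a * b)) ha hb hcop
      (by have := Nat.mul_pos ha hb; nlinarith)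
    refine ⟨s, t, ?_⟩
    rw [hform s t, ← hst]
    push_cast
    field_simp
  · rw [hset]
    constructor
    · exact ⟨0, by norm_num⟩
    · rintro c ⟨k, rfl⟩
      have hk : (1 : ℚ) / ((a : ℚ) * b) ≤ ((k : ℚ) + 1) / ((a : ℚ) * b) := by
        gcongr
        linarith [show (0 : ℚ) ≤ (k : ℚ) from Nat.cast_nonneg k]
      linarith
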